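/- arXiv:math/0211423 — 4 statements merged into one kernel-verified Lean document; each statement's English description precedes it below -/
import Mathlib

section
/- In a polynomial ring K[x_1,...,x_n] over a field, for nonzero polynomials f and g, the Newton polyhedron of the product satisfies N(f·g) = N(f) + N(g) (Minkowski sum). -/
set_option maxHeartbeats 1000000


open MvPolynomial
open scoped Pointwise

/-- The Newton polyhedron of a polynomial `f = Σ c_α x^α`: the convex hull of the
union of the translated positive orthants `α + ℝ_{≥0}^n` over exponents `α` with
nonzero coefficient. -/
noncomputable def newtonPolyhedron {K : Type*} [Field K] {n : ℕ}
    (f : MvPolynomial (Fin n) K) : Set (Fin n → ℝ) :=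
  convexHull ℝ
    (⋃ α ∈ f.support, {x : Fin n → ℝ | ∃ r : Fin n → ℝ,
      (∀ i, 0 ≤ r i) ∧ x = fun i => (α i : ℝ) + r i})

namespace NewtonAux

variable {n : ℕ}

/-- Cast an exponent vector to `ℝⁿ`. -/
def ecast (α : Fin n →₀ ℕ) : Fin n → ℝ := fun i => (α i : ℝ)

lemma ecast_add (α β : Fin n →₀ ℕ) : ecast (α + β) = ecast α + ecast β := by
  funext i
  simp [ecast]

/-- The nonnegative orthant. -/
def orth (n : ℕ) : Set (Fin n → ℝ) := {x | ∀ i, 0 ≤ x i}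

lemma orth_convex : Convex ℝ (orth n) := by
  intro x hx y hy a b ha hb _ i
  exact add_nonneg (mul_nonneg ha (hx i)) (mul_nonneg hb (hy i))

lemma orth_closed : IsClosed (orth n) := by
  have : orth n = ⋂ i, {x : Fin n → ℝ | 0 ≤ x i} := by
    ext x; simp [orth, Set.mem_iInter]
  rw [this]
  exact isClosed_iInter fun i => isClosed_le continuous_const (continuous_apply i)

lemma zero_mem_orth : (0 : Fin n → ℝ) ∈ orth n := fun i => le_refl 0

lemma orth_add : orth n + orth n = orth n := by
  apply Set.Subset.antisymm
  · rintro _ ⟨x, hx, y, hy, rfl⟩ i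
    exact add_nonneg (hx i) (hy i)
  · intro x hx
    exact ⟨x, hx, 0, zero_mem_orth, by simp⟩

/-- Base-`M` digit representations are unique. -/
lemma digits_inj : ∀ {n : ℕ} {M : ℕ} (a b : Fin n → ℕ), (∀ i, a i < M) → (∀ i, b i < M) →
    (∑ i, a i * M ^ (i : ℕ)) = (∑ i, b i * M ^ (i : ℕ)) → ∀ i, a i = b i := by
  intro n
  induction n with
  | zero => intro M a b _ _ _ i; exact absurd i.2 (by omega)
  | succ n ih =>
    intro M a b ha hb h i
    have e : ∀ (c : Fin (n + 1) → ℕ),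
        (∑ j, c j * M ^ (j : ℕ)) = c 0 + M * ∑ j : Fin n, c j.succ * M ^ (j : ℕ) := by
      intro c
      rw [Fin.sum_univ_succ, Finset.mul_sum]
      simp only [Fin.val_zero, pow_zero, mul_one, Fin.val_succ, pow_succ]
      congr 1
      apply Finset.sum_congr rfl
      intros; ring
    rw [e a, e b] at h
    have hM : 0 < M := lt_of_le_of_lt (Nat.zero_le _) (ha 0)
    have h0 : a 0 = b 0 := by
      have h1 := congrArg (· % M) h
      simpa [Nat.add_mul_mod_self_left, Nat.mod_eq_of_lt (ha 0), Nat.mod_eq_of_lt (hb 0)]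
        using h1
    rw [h0] at h
    have h2 : (∑ j : Fin n, a j.succ * M ^ (j : ℕ)) = ∑ j : Fin n, b j.succ * M ^ (j : ℕ) :=
      Nat.eq_of_mul_eq_mul_left hM (Nat.add_left_cancel h)
    have htail := ih (fun j => a j.succ) (fun j => b j.succ)
      (fun j => ha j.succ) (fun j => hb j.succ) h2
    refine Fin.cases ?_ ?_ i
    · exact h0
    · exact fun j => htail j

variable {K : Type*} [Field K]

lemma newton_eq (h : MvPolynomial (Fin n) K) :
    newtonPolyhedron h = convexHull ℝ (ecast '' ↑h.support) + orth n := by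
  have hset : (⋃ α ∈ h.support, {x : Fin n → ℝ | ∃ r : Fin n → ℝ,
      (∀ i, 0 ≤ r i) ∧ x = fun i => (α i : ℝ) + r i}) = ecast '' ↑h.support + orth n := by
    ext x
    simp only [Set.mem_iUnion, Set.mem_setOf_eq]
    constructor
    · rintro ⟨α, hα, r, hr, rfl⟩
      exact Set.add_mem_add ⟨α, hα, rfl⟩ hr
    · rintro ⟨a, ⟨α, hα, rfl⟩, r, hr, rfl⟩
      exact ⟨α, hα, r, hr, rfl⟩
  rw [newtonPolyhedron, hset, convexHull_add, orth_convex.convexHull_eq]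

lemma lower_bound (ℓ : (Fin n → ℝ) →L[ℝ] ℝ) (m : ℝ) {S : Set (Fin n → ℝ)}
    (hS : ∀ y ∈ S, m ≤ ℓ y) {x : Fin n → ℝ} (hx : x ∈ convexHull ℝ S) : m ≤ ℓ x := by
  have hc : Convex ℝ {y : Fin n → ℝ | m ≤ ℓ y} :=
    convex_halfSpace_ge (IsLinearMap.mk ℓ.map_add ℓ.map_smul) m
  exact convexHull_min hS hc hx

lemma key (f g : MvPolynomial (Fin n) K) (hf : f ≠ 0) (hg : g ≠ 0) :
    convexHull ℝ (ecast '' (↑f.support : Set (Fin n →₀ ℕ)) + ecast '' (↑g.support : Set (Fin n →₀ ℕ))) ⊆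
      convexHull ℝ (ecast '' (↑((f * g).support) : Set (Fin n →₀ ℕ))) + orth n := by
  classical
  intro x hx
  by_contra hnot
  have hfin : (ecast '' (↑((f * g).support) : Set (Fin n →₀ ℕ)) : Set (Fin n → ℝ)).Finite :=
    ((f * g).support.finite_toSet).image _
  have hcl : IsClosed (convexHull ℝ (ecast '' (↑((f * g).support) : Set (Fin n →₀ ℕ))) + orth n) :=
    IsClosed.add_left_of_isCompact orth_closed (hfin.isCompact_convexHull ℝ)
  have hcv : Convex ℝ (convexHull ℝ (ecast '' (↑((f * g).support) : Set (Fin n →₀ ℕ))) + orth n) :=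
    (convex_convexHull ℝ _).add orth_convex
  obtain ⟨ℓ, u, hxu, hu⟩ := geometric_hahn_banach_point_closed hcv hcl hnot
  set A := f.support with hA
  set B := g.support with hB
  set M : ℕ := 1 + (A ∪ B).sup (fun α => ∑ i, α i) with hMdef
  have hM : ∀ α ∈ A ∪ B, ∀ i, α i < M := by
    intro α hα i
    have h1 : α i ≤ ∑ j, α j :=
      Finset.single_le_sum (fun j _ => Nat.zero_le _) (Finset.mem_univ i)
    have h2 : (∑ j, α j) ≤ (A ∪ B).sup (fun α => ∑ i, α i) :=
      Finset.le_sup (f := fun α => ∑ i, α i) hα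
    omega
  set W : (Fin n →₀ ℕ) → ℕ := fun α => ∑ i, α i * M ^ (i : ℕ) with hWdef
  have W_add : ∀ α β, W (α + β) = W α + W β := by
    intro α β
    simp [hWdef, Finsupp.add_apply, add_mul, Finset.sum_add_distrib]
  obtain ⟨a, haA, hamin⟩ :=
    A.exists_min_image (fun α => toLex (ℓ (ecast α), W α)) (support_nonempty.mpr hf)
  obtain ⟨b, hbB, hbmin⟩ :=
    B.exists_min_image (fun α => toLex (ℓ (ecast α), W α)) (support_nonempty.mpr hg)
  have ha1 : ∀ α ∈ A, ℓ (ecast a) ≤ ℓ (ecast α) := by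
    intro α hα
    rcases Prod.Lex.le_iff.mp (hamin α hα) with h | h
    · exact le_of_lt h
    · exact le_of_eq h.1
  have hb1 : ∀ α ∈ B, ℓ (ecast b) ≤ ℓ (ecast α) := by
    intro α hα
    rcases Prod.Lex.le_iff.mp (hbmin α hα) with h | h
    · exact le_of_lt h
    · exact le_of_eq h.1
  have ha2 : ∀ α ∈ A, ℓ (ecast α) = ℓ (ecast a) → W a ≤ W α := by
    intro α hα heq
    rcases Prod.Lex.le_iff.mp (hamin α hα) with h | h
    · exact absurd heq (ne_of_gt h)
    · exact h.2
  have hb2 : ∀ α ∈ B, ℓ (ecast α) = ℓ (ecast b) → W b ≤ W α := by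
    intro α hα heq
    rcases Prod.Lex.le_iff.mp (hbmin α hα) with h | h
    · exact absurd heq (ne_of_gt h)
    · exact h.2
  set γ := a + b with hγ
  have hcoeff : coeff γ (f * g) = coeff a f * coeff b g := by
    rw [coeff_mul]
    apply Finset.sum_eq_single_of_mem (a, b) (Finset.HasAntidiagonal.mem_antidiagonal.mpr hγ.symm)
    · rintro ⟨p, q⟩ hpq hne
      rw [Finset.HasAntidiagonal.mem_antidiagonal] at hpq
      by_cases hp : coeff p f = 0
      · simp [hp]
      by_cases hq : coeff q g = 0
      · simp [hq]
      exfalso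
      have hpA : p ∈ A := mem_support_iff.mpr hp
      have hqB : q ∈ B := mem_support_iff.mpr hq
      have e1 : ℓ (ecast p) + ℓ (ecast q) = ℓ (ecast a) + ℓ (ecast b) := by
        rw [← map_add, ← map_add, ← ecast_add, ← ecast_add, hpq]
      have e2 : ℓ (ecast a) ≤ ℓ (ecast p) := ha1 p hpA
      have e3 : ℓ (ecast b) ≤ ℓ (ecast q) := hb1 q hqB
      have e4 : ℓ (ecast p) = ℓ (ecast a) := by linarith
      have e5 : ℓ (ecast q) = ℓ (ecast b) := by linarith
      have w1 : W a ≤ W p := ha2 p hpA e4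
      have w2 : W b ≤ W q := hb2 q hqB e5
      have wadd : W p + W q = W a + W b := by
        have hW : W (p + q) = W (a + b) := by rw [hpq]
        rw [W_add, W_add] at hW
        exact hW
      have w3 : W p = W a := by omega
      have w4 : W q = W b := by omega
      have hpa : p = a := by
        apply Finsupp.ext
        exact digits_inj (fun i => p i) (fun i => a i)
          (hM p (Finset.mem_union_left _ hpA)) (hM a (Finset.mem_union_left _ haA)) w3
      have hqb : q = b := by
        apply Finsupp.ext
        exact digits_inj (fun i => q i) (fun i => b i)
          (hM q (Finset.mem_union_right _ hqB)) (hM b (Finset.mem_union_right _ hbB)) w4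
      exact hne (by rw [hpa, hqb])
  have hγmem : γ ∈ (f * g).support :=
    mem_support_iff.mpr (by
      rw [hcoeff]
      exact mul_ne_zero (mem_support_iff.mp haA) (mem_support_iff.mp hbB))
  have h1 : ecast γ ∈ convexHull ℝ (ecast '' (↑((f * g).support) : Set (Fin n →₀ ℕ))) + orth n := by
    have hmem : ecast γ ∈ convexHull ℝ (ecast '' (↑((f * g).support) : Set (Fin n →₀ ℕ))) :=
      subset_convexHull ℝ _ ⟨γ, hγmem, rfl⟩
    have := Set.add_mem_add hmem (zero_mem_orth (n := n))
    simpa using this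
  have h2 : u < ℓ (ecast γ) := hu _ h1
  have h3 : ℓ (ecast a) + ℓ (ecast b) ≤ ℓ x := by
    apply lower_bound ℓ _ _ hx
    rintro y ⟨_, ⟨p, hp, rfl⟩, _, ⟨q, hq, rfl⟩, rfl⟩
    rw [map_add]
    exact add_le_add (ha1 p hp) (hb1 q hq)
  have h4 : ℓ (ecast γ) = ℓ (ecast a) + ℓ (ecast b) := by
    rw [hγ, ecast_add, map_add]
  linarith

end NewtonAux

open NewtonAux

/-- For nonzero polynomials `f, g` over a field, the Newton polyhedron of the
product is the Minkowski sum of the Newton polyhedra:  `N(f·g) = N(f) + N(g)`. -/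
theorem newtonPolyhedron_mul {K : Type*} [Field K] {n : ℕ}
    (f g : MvPolynomial (Fin n) K) (hf : f ≠ 0) (hg : g ≠ 0) :
    newtonPolyhedron (f * g) = newtonPolyhedron f + newtonPolyhedron g := by
  classical
  rw [newton_eq (f * g), newton_eq f, newton_eq g]
  have horth : orth n + orth n = orth n := orth_add
  have hTsub : ecast '' (↑((f * g).support) : Set (Fin n →₀ ℕ)) ⊆ ecast '' (↑f.support : Set (Fin n →₀ ℕ)) + ecast '' (↑g.support : Set (Fin n →₀ ℕ)) := by
    rintro _ ⟨γ, hγ, rfl⟩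
    have hmem := MvPolynomial.support_mul f g hγ
    rw [Finset.mem_add] at hmem
    obtain ⟨p, hp, q, hq, rfl⟩ := hmem
    rw [ecast_add]
    exact Set.add_mem_add ⟨p, hp, rfl⟩ ⟨q, hq, rfl⟩
  apply Set.Subset.antisymm
  · calc convexHull ℝ (ecast '' (↑((f * g).support) : Set (Fin n →₀ ℕ))) + orth n
        ⊆ convexHull ℝ (ecast '' (↑f.support : Set (Fin n →₀ ℕ)) + ecast '' (↑g.support : Set (Fin n →₀ ℕ))) + orth n :=
          Set.add_subset_add_right (convexHull_mono hTsub)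
      _ = (convexHull ℝ (ecast '' (↑f.support : Set (Fin n →₀ ℕ))) + convexHull ℝ (ecast '' (↑g.support : Set (Fin n →₀ ℕ))))
            + (orth n + orth n) := by rw [convexHull_add, horth]
      _ = (convexHull ℝ (ecast '' (↑f.support : Set (Fin n →₀ ℕ))) + orth n)
            + (convexHull ℝ (ecast '' (↑g.support : Set (Fin n →₀ ℕ))) + orth n) := add_add_add_comm _ _ _ _
  · calc (convexHull ℝ (ecast '' (↑f.support : Set (Fin n →₀ ℕ))) + orth n)
            + (convexHull ℝ (ecast '' (↑g.support : Set (Fin n →₀ ℕ))) + orth n)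
        = convexHull ℝ (ecast '' (↑f.support : Set (Fin n →₀ ℕ)) + ecast '' (↑g.support : Set (Fin n →₀ ℕ))) + (orth n + orth n) := by
          rw [add_add_add_comm, convexHull_add]
      _ = convexHull ℝ (ecast '' (↑f.support : Set (Fin n →₀ ℕ)) + ecast '' (↑g.support : Set (Fin n →₀ ℕ))) + orth n := by rw [horth]
      _ ⊆ (convexHull ℝ (ecast '' (↑((f * g).support) : Set (Fin n →₀ ℕ))) + orth n) + orth n :=
          Set.add_subset_add_right (key f g hf hg)
      _ = convexHull ℝ (ecast '' (↑((f * g).support) : Set (Fin n →₀ ℕ))) + orth n := by rw [add_assoc, horth]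
end

section
/- With notation as above (J ⊆ (x_1,...,x_k)^d = I(Z)^d, d = ord_0 J, blowup chart substitution), the weak transform J^∨ := x_1^{-d}·J^* satisfies ord_a'(J^∨) ≤ d at every point a' of the exceptional divisor x_1 = 0 lying over the origin. -/
open MvPolynomial

/-- The order of a polynomial: the least total degree of a nonzero term. -/
noncomputable def polyOrd {K : Type*} [Field K] {n : ℕ} (f : MvPolynomial (Fin n) K) : ℕ∞ :=
  sInf {d : ℕ∞ | ∃ m : Fin n →₀ ℕ, (↑(m.sum fun _ e => e) = d) ∧ MvPolynomial.coeff m f ≠ 0}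

/-- The order of a polynomial at the point `a` (order after translating `a` to the origin). -/
noncomputable def polyOrdAt {K : Type*} [Field K] {n : ℕ} (a : Fin n → K)
    (f : MvPolynomial (Fin n) K) : ℕ∞ :=
  polyOrd (MvPolynomial.aeval (fun i => MvPolynomial.X i + MvPolynomial.C (a i)) f)

/-- The order of an ideal at a point. -/
noncomputable def idealOrdAt {K : Type*} [Field K] {n : ℕ} (a : Fin n → K)
    (J : Ideal (MvPolynomial (Fin n) K)) : ℕ∞ :=
  ⨅ f : J, polyOrdAt a (f : MvPolynomial (Fin n) K)

/-- The blowup chart substitution `x_1 ↦ x_1`, `x_i ↦ x_1·x_i` (`2 ≤ i ≤ k`),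
`x_i ↦ x_i` (`i > k`), with `x_1` the variable of index `0`. -/
noncomputable def chartSubst {K : Type*} [Field K] {n : ℕ} (k : ℕ) :
    MvPolynomial (Fin (n + 1)) K →+* MvPolynomial (Fin (n + 1)) K :=
  (MvPolynomial.aeval (fun i : Fin (n + 1) =>
    if 1 ≤ (i : ℕ) ∧ (i : ℕ) < k then MvPolynomial.X 0 * MvPolynomial.X i
    else MvPolynomial.X i)).toRingHom

/- ### Auxiliary lemmas -/

open Finsupp

lemma WT.exists_of_sInf_le {S : Set ℕ∞} {d : ℕ} (h : sInf S ≤ (d:ℕ∞)) : ∃ s ∈ S, s ≤ (d:ℕ∞) := by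
  by_contra hc
  push_neg at hc
  have h2 : (d:ℕ∞) + 1 ≤ sInf S := le_sInf fun s hs => by
    rw [ENat.add_one_le_iff (by exact_mod_cast ENat.coe_ne_top d)]
    exact hc s hs
  have h3 := h2.trans h
  exact absurd h3 (by simp [ENat.add_one_le_iff])

lemma WT.exists_of_iInf_le {ι : Sort*} {f : ι → ℕ∞} {d : ℕ} (h : (⨅ i, f i) ≤ (d:ℕ∞)) :
    ∃ i, f i ≤ (d:ℕ∞) := by
  by_contra hc
  push_neg at hc
  have h2 : (d:ℕ∞) + 1 ≤ ⨅ i, f i := le_iInf fun i => by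
    rw [ENat.add_one_le_iff (by exact_mod_cast ENat.coe_ne_top d)]
    exact hc i
  have h3 := h2.trans h
  exact absurd h3 (by simp [ENat.add_one_le_iff])

section WTAux
variable {K : Type*} [Field K] {N : ℕ}

lemma WT.term_eq (i : Fin N) (a : K) (e j : ℕ) :
    (X i ^ j * C a ^ (e - j) * ((e.choose j : ℕ) : MvPolynomial (Fin N) K))
      = monomial (Finsupp.single i j) (a ^ (e - j) * (e.choose j : K)) := by
  rw [X_pow_eq_monomial, ← C_pow, ← map_natCast (C : K →+* MvPolynomial (Fin N) K),
    mul_assoc, ← C_mul, mul_comm, C_mul_monomial, mul_one]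

lemma WT.support_pow_sub (i : Fin N) (a : K) (e : ℕ) :
    ∀ β ∈ ((X i + C a : MvPolynomial (Fin N) K) ^ e).support,
      ∃ j, j ≤ e ∧ (a = 0 → j = e) ∧ β = Finsupp.single i j := by
  intro β hβ
  by_cases ha : a = 0
  · subst ha
    rw [map_zero, add_zero, X_pow_eq_monomial] at hβ
    have := MvPolynomial.support_monomial_subset hβ
    exact ⟨e, le_rfl, fun _ => rfl, by simpa using this⟩
  · rw [add_pow] at hβ
    obtain ⟨j, hj, hβ2⟩ := Finset.mem_biUnion.mp (MvPolynomial.support_sum hβ)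
    rw [Finset.mem_range] at hj
    rw [WT.term_eq] at hβ2
    refine ⟨j, by omega, fun h => absurd h ha, ?_⟩
    simpa using MvPolynomial.support_monomial_subset hβ2

lemma WT.coeff_top_pow_sub (i : Fin N) (a : K) (e : ℕ) :
    coeff (Finsupp.single i e) ((X i + C a : MvPolynomial (Fin N) K) ^ e) = 1 := by
  rw [add_pow, coeff_sum]
  rw [Finset.sum_eq_single e]
  · rw [WT.term_eq, coeff_monomial, if_pos rfl]
    simp
  · intro j hj hne
    rw [WT.term_eq, coeff_monomial, if_neg]
    intro hsingle
    exact hne (by simpa using (DFunLike.congr_fun hsingle i))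
  · intro h
    simp at h

lemma WT.translate_monomial (a : Fin N → K) (α : Fin N →₀ ℕ) : ∀ c : K,
    (∀ β : Fin N →₀ ℕ, coeff β ((aeval (fun i => X i + C (a i))) (monomial α c)) ≠ 0 →
       (∀ i, β i ≤ α i) ∧ ∀ i, a i = 0 → β i = α i)
    ∧ coeff α ((aeval (fun i => X i + C (a i))) (monomial α c)) = c := by
  induction α using Finsupp.induction with
  | zero =>
    intro c
    constructor
    · intro β hβ
      rw [monomial_zero', aeval_C, MvPolynomial.algebraMap_eq] at hβ
      have : β = 0 := by
        by_contra hne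
        rw [MvPolynomial.coeff_C, if_neg (fun h => hne h.symm)] at hβ
        exact hβ rfl
      subst this
      exact ⟨fun i => le_rfl, fun i _ => rfl⟩
    · rw [monomial_zero', aeval_C, MvPolynomial.algebraMap_eq]
      simp
  | single_add i e α' hi he IH =>
    intro c
    have hsplit : (monomial (Finsupp.single i e + α') c : MvPolynomial (Fin N) K)
        = monomial (Finsupp.single i e) 1 * monomial α' c := by
      rw [monomial_mul, one_mul]
    have hP : (aeval (fun i => X i + C (a i))) (monomial (Finsupp.single i e) (1:K))
        = (X i + C (a i)) ^ e := by
      rw [aeval_monomial, Finsupp.prod_single_index] <;> simp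
    have hαi : α' i = 0 := Finsupp.notMem_support_iff.mp hi
    set τ := (aeval (fun i => X i + C (a i)) : MvPolynomial (Fin N) K →ₐ[K] MvPolynomial (Fin N) K)
    have key : τ (monomial (Finsupp.single i e + α') c)
        = (X i + C (a i)) ^ e * τ (monomial α' c) := by
      rw [hsplit, map_mul, hP]
    constructor
    · intro β hβ
      rw [key] at hβ
      have hmem : β ∈ ((X i + C (a i)) ^ e * τ (monomial α' c)).support :=
        MvPolynomial.mem_support_iff.mpr hβ
      obtain ⟨β1, hβ1, β2, hβ2, hadd⟩ := Finset.mem_add.mp (MvPolynomial.support_mul _ _ hmem)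
      obtain ⟨j, hje, hj0, rfl⟩ := WT.support_pow_sub i (a i) e β1 hβ1
      obtain ⟨h2le, h2z⟩ := (IH c).1 β2 (MvPolynomial.mem_support_iff.mp hβ2)
      subst hadd
      constructor
      · intro ℓ
        simp only [Finsupp.add_apply, Finsupp.single_apply]
        by_cases hℓ : i = ℓ
        · subst hℓ; simp only [if_pos rfl]; exact Nat.add_le_add hje (h2le i)
        · simp only [if_neg hℓ]; exact Nat.add_le_add le_rfl (h2le ℓ)
      · intro ℓ hℓ0
        simp only [Finsupp.add_apply, Finsupp.single_apply]
        by_cases hℓ : i = ℓ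
        · subst hℓ; simp only [if_pos rfl]; rw [hj0 hℓ0, h2z i hℓ0]
        · simp only [if_neg hℓ]; rw [h2z ℓ hℓ0]
    · rw [key, coeff_mul]
      rw [Finset.sum_eq_single (Finsupp.single i e, α')]
      · rw [WT.coeff_top_pow_sub, (IH c).2, one_mul]
      · rintro ⟨x1, x2⟩ hx hne
        replace hx : x1 + x2 = Finsupp.single i e + α' := Finset.HasAntidiagonal.mem_antidiagonal.mp hx
        by_contra hterm
        have hx1 : coeff x1 ((X i + C (a i)) ^ e) ≠ 0 := fun h => hterm (by rw [h, zero_mul])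
        have hx2 : coeff x2 (τ (monomial α' c)) ≠ 0 := fun h => hterm (by rw [h, mul_zero])
        obtain ⟨j, hje, hj0, rfl⟩ := WT.support_pow_sub i (a i) e x1
          (MvPolynomial.mem_support_iff.mpr hx1)
        obtain ⟨h2le, h2z⟩ := (IH c).1 x2 hx2
        have hxi := DFunLike.congr_fun hx i
        simp [Finsupp.single_apply] at hxi
        have hx2i : x2 i = 0 := by have h := h2le i; omega
        have hje' : j = e := by omega
        have hx2eq : x2 = α' := by
          ext ℓ
          by_cases hℓ : i = ℓ
          · subst hℓ; rw [hx2i, hαi]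
          · have := DFunLike.congr_fun hx ℓ
            simp only [Finsupp.add_apply, Finsupp.single_apply, if_neg hℓ] at this
            omega
        exact hne (by rw [hje', hx2eq])
      · intro h
        simp [Finset.mem_antidiagonal] at h

/-- sum of exponents over the first `k` variables -/
def WT.sK (k : ℕ) (m : Fin N →₀ ℕ) : ℕ := ∑ i : Fin N, if (i:ℕ) < k then m i else 0

lemma WT.sK_add (k : ℕ) (m1 m2 : Fin N →₀ ℕ) : WT.sK k (m1 + m2) = WT.sK k m1 + WT.sK k m2 := by
  unfold WT.sK
  rw [← Finset.sum_add_distrib]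
  apply Finset.sum_congr rfl
  intro i _
  by_cases h : (i:ℕ) < k <;> simp [h]

/-- the ideal of polynomials all of whose monomials have `sK ≥ c` -/
def WT.SDeg (k c : ℕ) : Ideal (MvPolynomial (Fin N) K) where
  carrier := {f | ∀ m ∈ f.support, c ≤ WT.sK k m}
  zero_mem' := by simp
  add_mem' := by
    intro p q hp hq m hm
    rcases Finset.mem_union.mp (MvPolynomial.support_add hm) with h | h
    · exact hp m h
    · exact hq m h
  smul_mem' := by
    intro p f hf m hm
    rw [smul_eq_mul] at hm
    obtain ⟨m1, hm1, m2, hm2, rfl⟩ := Finset.mem_add.mp (MvPolynomial.support_mul _ _ hm)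
    rw [WT.sK_add]
    exact le_add_self.trans (Nat.add_le_add le_rfl (hf m2 hm2))

lemma WT.mul_SDeg (k a b : ℕ) (p q : MvPolynomial (Fin N) K)
    (hp : p ∈ WT.SDeg k a) (hq : q ∈ WT.SDeg k b) : p * q ∈ WT.SDeg (K := K) k (a + b) := by
  intro m hm
  obtain ⟨m1, hm1, m2, hm2, rfl⟩ := Finset.mem_add.mp (MvPolynomial.support_mul _ _ hm)
  rw [WT.sK_add]
  exact Nat.add_le_add (hp m1 hm1) (hq m2 hm2)

lemma WT.span_pow_le (k c : ℕ) :
    (Ideal.span {g : MvPolynomial (Fin N) K | ∃ i : Fin N, (i : ℕ) < k ∧ g = X i}) ^ c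
      ≤ WT.SDeg k c := by
  induction c with
  | zero => intro f _ m _; exact Nat.zero_le _
  | succ c IH =>
    rw [pow_succ]
    apply Ideal.mul_le.mpr
    intro r hr s hs
    have hr' : r ∈ WT.SDeg (K := K) k c := IH hr
    have hs' : s ∈ WT.SDeg (K := K) k 1 := by
      revert hs
      apply Ideal.span_le.mpr
      rintro g ⟨i, hik, rfl⟩ m hm
      have := MvPolynomial.support_X (R := K) (n := i) ▸ hm
      rw [Finset.mem_singleton] at this
      subst this
      unfold WT.sK
      rw [Finset.sum_eq_single i]
      · simp [hik]
      · intro j _ hne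
        simp [Finsupp.single_apply, Ne.symm hne]
      · simp
    exact WT.mul_SDeg k c 1 r s hr' hs'

lemma WT.prod_monomial_one {ι : Type*} (s : Finset ι) (u : ι → (Fin N →₀ ℕ)) :
    (∏ i ∈ s, monomial (u i) (1:K)) = monomial (∑ i ∈ s, u i) 1 := by
  classical
  induction s using Finset.induction with
  | empty => simp
  | insert _ _ hni IH => rw [Finset.prod_insert hni, Finset.sum_insert hni, IH, monomial_mul, one_mul]

end WTAux

section C
variable {K : Type*} [Field K] {n : ℕ}

lemma WT.chartSubst_monomial (k : ℕ) (hk : 1 ≤ k) (m : Fin (n+1) →₀ ℕ) (c : K) :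
    chartSubst k (monomial m c)
      = monomial (Finsupp.single 0 (WT.sK k m) + m.erase 0) c := by
  show (aeval _) (monomial m c) = _
  rw [aeval_monomial]
  have hfac : ∀ i ∈ m.support,
      (if 1 ≤ (i:ℕ) ∧ (i:ℕ) < k then (X 0 * X i : MvPolynomial (Fin (n+1)) K) else X i) ^ (m i)
        = monomial (if 1 ≤ (i:ℕ) ∧ (i:ℕ) < k then
            Finsupp.single 0 (m i) + Finsupp.single i (m i) else Finsupp.single i (m i)) 1 := by
    intro i _
    by_cases h : 1 ≤ (i:ℕ) ∧ (i:ℕ) < k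
    · rw [if_pos h, if_pos h, mul_pow, X_pow_eq_monomial, X_pow_eq_monomial, monomial_mul, mul_one]
    · rw [if_neg h, if_neg h, X_pow_eq_monomial]
  rw [Finsupp.prod, Finset.prod_congr rfl hfac, WT.prod_monomial_one]
  have hexp : (∑ i ∈ m.support, (if 1 ≤ (i:ℕ) ∧ (i:ℕ) < k then
        Finsupp.single (0 : Fin (n+1)) (m i) + Finsupp.single i (m i) else Finsupp.single i (m i)))
      = Finsupp.single 0 (WT.sK k m) + m.erase 0 := by
    ext j
    rw [Finsupp.finset_sum_apply]
    by_cases hj : j = (0 : Fin (n+1))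
    · subst hj
      have hterm : ∀ i ∈ m.support,
          (if 1 ≤ (i:ℕ) ∧ (i:ℕ) < k then
            Finsupp.single (0 : Fin (n+1)) (m i) + Finsupp.single i (m i)
           else Finsupp.single i (m i)) 0 = if (i:ℕ) < k then m i else 0 := by
        intro i _
        by_cases h : 1 ≤ (i:ℕ) ∧ (i:ℕ) < k
        · have hi0 : i ≠ 0 := by
            intro h0; subst h0; simp at h
          rw [if_pos h, if_pos h.2]
          rw [Finsupp.add_apply, Finsupp.single_apply, Finsupp.single_apply,
            if_pos rfl, if_neg hi0, add_zero]
        · rw [if_neg h]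
          by_cases hi0 : i = (0 : Fin (n+1))
          · subst hi0
            rw [Finsupp.single_apply, if_pos rfl, if_pos (by simp; omega)]
          · have hik : ¬ ((i:ℕ) < k) := by
              rcases Nat.eq_zero_or_pos (i:ℕ) with h0 | h1
              · exact absurd (Fin.ext (by simpa using h0) : i = 0) hi0
              · intro hlt; exact h ⟨h1, hlt⟩
            rw [Finsupp.single_apply, if_neg hi0, if_neg hik]
      rw [Finset.sum_congr rfl hterm]
      have : ∑ i ∈ m.support, (if (i:ℕ) < k then m i else 0) = WT.sK k m := by
        unfold WT.sK
        apply Finset.sum_subset (Finset.subset_univ _)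
        intro i _ hi
        rw [Finsupp.notMem_support_iff.mp hi]
        simp
      rw [this, Finsupp.add_apply, Finsupp.single_apply, if_pos rfl, Finsupp.erase_apply,
        if_pos rfl, add_zero]
    · have hterm : ∀ i ∈ m.support,
          (if 1 ≤ (i:ℕ) ∧ (i:ℕ) < k then
            Finsupp.single (0 : Fin (n+1)) (m i) + Finsupp.single i (m i)
           else Finsupp.single i (m i)) j = if i = j then m i else 0 := by
        intro i _
        by_cases h : 1 ≤ (i:ℕ) ∧ (i:ℕ) < k
        · rw [if_pos h, Finsupp.add_apply, Finsupp.single_apply, Finsupp.single_apply,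
            if_neg (Ne.symm hj), zero_add]
        · rw [if_neg h, Finsupp.single_apply]
      rw [Finset.sum_congr rfl hterm, Finset.sum_ite_eq' m.support j (fun i => m i)]
      rw [Finsupp.add_apply, Finsupp.single_apply, if_neg (Ne.symm hj), Finsupp.erase_apply,
        if_neg hj, zero_add]
      by_cases hjs : j ∈ m.support
      · rw [if_pos hjs]
      · rw [if_neg hjs, Finsupp.notMem_support_iff.mp hjs]
  rw [hexp, MvPolynomial.algebraMap_eq, C_mul_monomial, mul_one]

end C

/- ### Main theorem -/

set_option maxHeartbeats 2000000 in
/-- Let `J ⊆ I(Z)^d` with `Z = {x_1 = ... = x_k = 0}` and `d = ord_0 J > 0`.  The weak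
transform `J^∨ = x_1^{-d}·J^*` under the blowup chart has order `≤ d` at every point
`a'` of the exceptional divisor `x_1 = 0` lying over the origin. -/
theorem weakTransform_order_le {K : Type*} [Field K] {n : ℕ} (k : ℕ)
    (hk : 1 ≤ k) (hkn : k ≤ n + 1)
    (J : Ideal (MvPolynomial (Fin (n + 1)) K)) (d : ℕ) (hd : 0 < d)
    (hord : idealOrdAt (0 : Fin (n + 1) → K) J = d)
    (hJ : J ≤ (Ideal.span {g : MvPolynomial (Fin (n + 1)) K |
        ∃ i : Fin (n + 1), (i : ℕ) < k ∧ g = MvPolynomial.X i}) ^ d)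
    (a' : Fin (n + 1) → K) (ha'exc : a' 0 = 0)
    (ha'orig : ∀ i : Fin (n + 1), k ≤ (i : ℕ) → a' i = 0) :
    idealOrdAt a'
      (Submodule.colon (Ideal.map (chartSubst k) J)
        ((Ideal.span {MvPolynomial.X 0 ^ d} : Ideal (MvPolynomial (Fin (n + 1)) K)) :
          Set (MvPolynomial (Fin (n + 1)) K))) ≤ (d : ℕ∞) := by
  classical
  -- Step 1: find f ∈ J of order exactly d at the origin
  have hiInf : (⨅ F : J, polyOrdAt (0 : Fin (n+1) → K) (F : MvPolynomial (Fin (n+1)) K))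
      ≤ (d:ℕ∞) := le_of_eq hord
  obtain ⟨⟨f, hfJ⟩, hF⟩ := WT.exists_of_iInf_le hiInf
  have hF' : polyOrd f ≤ (d:ℕ∞) := by
    have heq : polyOrdAt (0 : Fin (n+1) → K) f = polyOrd f := by
      unfold polyOrdAt
      congr 1
      simp
    rwa [heq] at hF
  simp only [polyOrd] at hF'
  obtain ⟨s, ⟨m₀, hm₀deg, hm₀ne⟩, hsle⟩ := WT.exists_of_sInf_le hF'
  rw [← hm₀deg] at hsle
  have hm₀d : (m₀.sum fun _ e => e) ≤ d := by exact_mod_cast hsle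
  -- support bound from hJ
  have hsupp : ∀ m ∈ f.support, d ≤ WT.sK k m := WT.span_pow_le k d (hJ hfJ)
  have hdeg_eq : ∀ m : Fin (n+1) →₀ ℕ, (m.sum fun _ e => e) = ∑ i : Fin (n+1), m i :=
    fun m => Finsupp.sum_fintype m _ (fun _ => rfl)
  have hsK_le : ∀ m : Fin (n+1) →₀ ℕ, WT.sK k m ≤ ∑ i : Fin (n+1), m i := by
    intro m
    unfold WT.sK
    apply Finset.sum_le_sum
    intro i _
    by_cases h : (i:ℕ) < k <;> simp [h]
  have hm₀supp : m₀ ∈ f.support := MvPolynomial.mem_support_iff.mpr hm₀ne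
  have hm₀deg' : ∑ i : Fin (n+1), m₀ i = d := by
    have h1 := hsupp m₀ hm₀supp
    have h2 := hsK_le m₀
    rw [hdeg_eq] at hm₀d
    omega
  -- the set of degree-d monomials of f, and the maximizer m*
  set tK : (Fin (n+1) →₀ ℕ) → ℕ :=
    fun m => ∑ i : Fin (n+1), if 1 ≤ (i:ℕ) ∧ (i:ℕ) < k then m i else 0 with htK
  have hsK_split : ∀ m : Fin (n+1) →₀ ℕ, WT.sK k m = m 0 + tK m := by
    intro m
    unfold WT.sK
    have hsplit : ∀ i ∈ (Finset.univ : Finset (Fin (n+1))),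
        (if (i:ℕ) < k then m i else 0)
          = (if i = (0:Fin (n+1)) then m i else 0)
            + (if 1 ≤ (i:ℕ) ∧ (i:ℕ) < k then m i else 0) := by
      intro i _
      by_cases hi0 : i = (0 : Fin (n+1))
      · subst hi0
        rw [if_pos rfl, if_pos (show ((0:Fin (n+1)):ℕ) < k by simp; omega),
          if_neg (by simp), add_zero]
      · have hne0 : (i:ℕ) ≠ 0 := fun h => hi0 (Fin.ext (by simpa using h))
        by_cases hik : (i:ℕ) < k
        · rw [if_pos hik, if_neg hi0, if_pos ⟨by omega, hik⟩, zero_add]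
        · rw [if_neg hik, if_neg hi0, if_neg (fun h => hik h.2), zero_add]
    rw [Finset.sum_congr rfl hsplit, Finset.sum_add_distrib,
      Finset.sum_ite_eq' Finset.univ (0 : Fin (n+1)) (fun i => m i),
      if_pos (Finset.mem_univ _)]
  set Sstar := f.support.filter (fun m => ∑ i : Fin (n+1), m i = d) with hSstar
  have hm₀S : m₀ ∈ Sstar := Finset.mem_filter.mpr ⟨hm₀supp, hm₀deg'⟩
  have hSfacts : ∀ m ∈ Sstar, WT.sK k m = d ∧ (∀ i : Fin (n+1), k ≤ (i:ℕ) → m i = 0) := by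
    intro m hm
    obtain ⟨hmsupp, hmdeg⟩ := Finset.mem_filter.mp hm
    have h1 : d ≤ WT.sK k m := hsupp m hmsupp
    have h2 : WT.sK k m ≤ ∑ i : Fin (n+1), m i := hsK_le m
    have hsKd : WT.sK k m = d := by omega
    refine ⟨hsKd, ?_⟩
    have hpw : ∀ i ∈ (Finset.univ : Finset (Fin (n+1))),
        (if (i:ℕ) < k then m i else 0) ≤ m i := by
      intro i _
      by_cases h : (i:ℕ) < k <;> simp [h]
    have hsum : ∑ i : Fin (n+1), (if (i:ℕ) < k then m i else 0) = ∑ i : Fin (n+1), m i := by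
      show WT.sK k m = _
      omega
    have heach := (Finset.sum_eq_sum_iff_of_le hpw).mp hsum
    intro i hik
    have := heach i (Finset.mem_univ i)
    rw [if_neg (by omega)] at this
    omega
  obtain ⟨mstar, hmstarS, hmax⟩ := Finset.exists_max_image Sstar tK ⟨m₀, hm₀S⟩
  have hmstar_supp : mstar ∈ f.support := (Finset.mem_filter.mp hmstarS).1
  have hmstar_ne : coeff mstar f ≠ 0 := MvPolynomial.mem_support_iff.mp hmstar_supp
  have hmstar_sK : WT.sK k mstar = d := (hSfacts mstar hmstarS).1
  have hmstar_hi : ∀ i : Fin (n+1), k ≤ (i:ℕ) → mstar i = 0 := (hSfacts mstar hmstarS).2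
  -- the weak transform g of f
  set Nm : (Fin (n+1) →₀ ℕ) → (Fin (n+1) →₀ ℕ) :=
    fun m => Finsupp.single 0 (WT.sK k m - d) + m.erase 0 with hNm
  set g : MvPolynomial (Fin (n+1)) K :=
    ∑ m ∈ f.support, monomial (Nm m) (coeff m f) with hg
  have hXg : (X 0 : MvPolynomial (Fin (n+1)) K) ^ d * g = chartSubst k f := by
    rw [hg, Finset.mul_sum]
    have hterm : ∀ m ∈ f.support,
        (X (0:Fin (n+1)) : MvPolynomial (Fin (n+1)) K) ^ d * monomial (Nm m) (coeff m f)
          = chartSubst k (monomial m (coeff m f)) := by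
      intro m hm
      have hds : d + (WT.sK k m - d) = WT.sK k m := by have := hsupp m hm; omega
      have hd2 : Finsupp.single (0 : Fin (n+1)) d + Nm m
          = Finsupp.single 0 (WT.sK k m) + m.erase 0 := by
        simp only [hNm]
        rw [← add_assoc, ← Finsupp.single_add, hds]
      rw [WT.chartSubst_monomial k hk, X_pow_eq_monomial, monomial_mul, one_mul, hd2]
    rw [Finset.sum_congr rfl hterm,
      ← map_sum (chartSubst k) (fun m => monomial m (coeff m f)) f.support,
      MvPolynomial.support_sum_monomial_coeff]
  have hgmem : g ∈ Submodule.colon (Ideal.map (chartSubst k) J)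
      ((Ideal.span {(X 0 : MvPolynomial (Fin (n+1)) K) ^ d} : Ideal (MvPolynomial (Fin (n+1)) K)) :
          Set (MvPolynomial (Fin (n+1)) K)) := by
    rw [Submodule.mem_colon]
    intro p hp
    obtain ⟨c, rfl⟩ := Ideal.mem_span_singleton.mp hp
    rw [smul_eq_mul]
    have heq : g * ((X 0 : MvPolynomial (Fin (n+1)) K) ^ d * c) = (chartSubst k f) * c := by
      rw [← hXg]; ring
    rw [heq]
    exact Ideal.mul_mem_right c _ (Ideal.mem_map_of_mem _ hfJ)
  -- the distinguished monomial of the translated weak transform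
  set βs : Fin (n+1) →₀ ℕ := mstar.erase 0 with hβs
  have hNmstar : Nm mstar = βs := by
    simp only [hNm, hβs, hmstar_sK]
    simp
  have hcoeff : coeff βs ((aeval (fun i => X i + C (a' i))) g) = coeff mstar f := by
    rw [hg, map_sum, coeff_sum]
    rw [Finset.sum_eq_single mstar]
    · rw [hNmstar]
      exact (WT.translate_monomial a' βs (coeff mstar f)).2
    · intro m hm hne
      by_contra hc0
      obtain ⟨hle, hz⟩ := (WT.translate_monomial a' (Nm m) (coeff m f)).1 βs hc0
      -- sK k m = d
      have hβs0 : βs 0 = 0 := by rw [hβs]; simp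
      have hNm0 : Nm m 0 = WT.sK k m - d := by
        rw [hNm]; simp
      have hsKm : WT.sK k m = d := by
        have h1 := hz 0 ha'exc
        have h2 := hsupp m hm
        rw [hβs0, hNm0] at h1
        omega
      -- m i = 0 for k ≤ i
      have hmhi : ∀ i : Fin (n+1), k ≤ (i:ℕ) → m i = 0 := by
        intro i hik
        have hi0 : i ≠ 0 := by
          intro h; subst h; simp at hik; omega
        have h1 := hz i (ha'orig i hik)
        have h2 : βs i = mstar i := by rw [hβs, Finsupp.erase_apply, if_neg hi0]
        have h3 : Nm m i = m i := by
          rw [hNm]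
          simp only [Finsupp.add_apply, Finsupp.single_apply, Finsupp.erase_apply]
          rw [if_neg (fun h => hi0 h.symm), if_neg hi0, zero_add]
        rw [h2, h3] at h1
        rw [← h1, hmstar_hi i hik]
      -- m ∈ Sstar
      have hmdeg : ∑ i : Fin (n+1), m i = d := by
        have hsplit2 : ∀ i ∈ (Finset.univ : Finset (Fin (n+1))),
            m i = (if (i:ℕ) < k then m i else 0) + (if (i:ℕ) < k then 0 else m i) := by
          intro i _
          by_cases h : (i:ℕ) < k <;> simp [h]
        rw [Finset.sum_congr rfl hsplit2, Finset.sum_add_distrib]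
        have hz2 : ∑ i : Fin (n+1), (if (i:ℕ) < k then 0 else m i) = 0 := by
          apply Finset.sum_eq_zero
          intro i _
          by_cases h : (i:ℕ) < k
          · simp [h]
          · rw [if_neg h, hmhi i (by omega)]
        rw [hz2, add_zero]
        exact hsKm
      have hmS : m ∈ Sstar := Finset.mem_filter.mpr ⟨hm, hmdeg⟩
      -- pointwise comparison on middle variables
      have hmid_le : ∀ i : Fin (n+1), 1 ≤ (i:ℕ) → (i:ℕ) < k → mstar i ≤ m i := by
        intro i h1 h2
        have hi0 : i ≠ 0 := by
          intro h; subst h; simp at h1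
        have hβ : βs i = mstar i := by rw [hβs, Finsupp.erase_apply, if_neg hi0]
        have hN : Nm m i = m i := by
          rw [hNm]
          simp only [Finsupp.add_apply, Finsupp.single_apply, Finsupp.erase_apply]
          rw [if_neg (fun h => hi0 h.symm), if_neg hi0, zero_add]
        have := hle i
        rw [hβ, hN] at this
        exact this
      have hpw : ∀ i ∈ (Finset.univ : Finset (Fin (n+1))),
          (if 1 ≤ (i:ℕ) ∧ (i:ℕ) < k then mstar i else 0)
            ≤ (if 1 ≤ (i:ℕ) ∧ (i:ℕ) < k then m i else 0) := by
        intro i _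
        by_cases h : 1 ≤ (i:ℕ) ∧ (i:ℕ) < k
        · rw [if_pos h, if_pos h]; exact hmid_le i h.1 h.2
        · rw [if_neg h, if_neg h]
      have htKle : tK mstar ≤ tK m := Finset.sum_le_sum hpw
      have htKeq : tK mstar = tK m := le_antisymm htKle (hmax m hmS)
      have heach := (Finset.sum_eq_sum_iff_of_le hpw).mp htKeq
      -- conclude m = mstar
      have hmeq : m = mstar := by
        ext i
        by_cases hi0 : i = (0 : Fin (n+1))
        · subst hi0
          have hs1 := hsK_split m
          have hs2 := hsK_split mstar
          rw [hsKm] at hs1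
          rw [hmstar_sK] at hs2
          omega
        · by_cases hik : (i:ℕ) < k
          · have h1 : 1 ≤ (i:ℕ) := by
              rcases Nat.eq_zero_or_pos (i:ℕ) with h0 | h1
              · exact absurd (Fin.ext (by simpa using h0)) hi0
              · omega
            have := heach i (Finset.mem_univ i)
            rw [if_pos ⟨h1, hik⟩, if_pos ⟨h1, hik⟩] at this
            omega
          · rw [hmhi i (by omega), hmstar_hi i (by omega)]
      exact absurd hmeq hne
    · intro h
      exact absurd hmstar_supp h
  have hβs_ne : coeff βs ((aeval (fun i => X i + C (a' i))) g) ≠ 0 := by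
    rw [hcoeff]; exact hmstar_ne
  have hβs_deg : (βs.sum fun _ e => e) ≤ d := by
    rw [hdeg_eq]
    have hpt : ∀ i ∈ (Finset.univ : Finset (Fin (n+1))), βs i ≤ mstar i := by
      intro i _
      rw [hβs, Finsupp.erase_apply]
      by_cases h : i = (0 : Fin (n+1)) <;> simp [h]
    have := Finset.sum_le_sum hpt
    have hdm : ∑ i : Fin (n+1), mstar i = d := (Finset.mem_filter.mp hmstarS).2
    omega
  have hgord : polyOrdAt a' g ≤ (d : ℕ∞) := by
    unfold polyOrdAt polyOrd
    refine le_trans (sInf_le ⟨βs, rfl, hβs_ne⟩) ?_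
    exact_mod_cast hβs_deg
  have hfin : idealOrdAt a'
      (Submodule.colon (Ideal.map (chartSubst k) J)
        ((Ideal.span {(MvPolynomial.X 0 : MvPolynomial (Fin (n+1)) K) ^ d} :
            Ideal (MvPolynomial (Fin (n+1)) K)) : Set (MvPolynomial (Fin (n+1)) K)))
      ≤ polyOrdAt a' g := by
    apply iInf_le (fun F : (Submodule.colon (Ideal.map (chartSubst k) J)
        ((Ideal.span {(MvPolynomial.X 0 : MvPolynomial (Fin (n+1)) K) ^ d} :
            Ideal (MvPolynomial (Fin (n+1)) K)) : Set (MvPolynomial (Fin (n+1)) K))) =>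
      polyOrdAt a' (F : MvPolynomial (Fin (n+1)) K)) ⟨g, hgmem⟩
  exact le_trans hfin hgord
end

section
/- Let f, g be nonzero elements of K[[x, y_1,...,y_{n−1}]] with orders c_P = ord(f), c_Q = ord(g), and let e_f, e_g, e_{fg} ∈ ℚ_{≥0} ∪ {∞} denote the orders (at the origin, in the y-variables) of the projected Newton polyhedra of f, g, f·g under the projection from (c_P,0,...,0), (c_Q,0,...,0), (c_P+c_Q,0,...,0) respectively, defined by sending a point (j,γ) with j < c to (c/(c−j))·γ. Then e_{fg}/(c_P+c_Q) = min{ e_f/c_P, e_g/c_Q }. -/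
noncomputable section

open scoped ENNReal

variable {K : Type*} [Field K] {m : ℕ}

/-- `K[[x, y_1, ..., y_{n-1}]]` viewed as power series in `x` over `A = K[[y]]`. -/
abbrev PS (K : Type*) [Field K] (m : ℕ) := PowerSeries (MvPowerSeries (Fin m) K)

/-- The total order of `h = Σ_j a_j(y) x^j`: `min_j (j + ord a_j)`. -/
def ordT (h : PS K m) : ℝ≥0∞ :=
  ⨅ j : ℕ, ((j : ℝ≥0∞) +
    ((MvPowerSeries.order (PowerSeries.coeff (R := MvPowerSeries (Fin m) K) j h) : ℕ∞) : ℝ≥0∞))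

/-- The normalized order of the projected Newton polyhedron of `h` (order `c`):
`e_h = min_{j<c} (c/(c−j))·ord(a_{h,j})`. -/
def eOrd (h : PS K m) (c : ℕ) : ℝ≥0∞ :=
  ⨅ j : ℕ, ⨅ _ : j < c,
    ((c : ℝ≥0∞) / ((c : ℝ≥0∞) - (j : ℝ≥0∞))) *
      ((MvPowerSeries.order (PowerSeries.coeff (R := MvPowerSeries (Fin m) K) j h) : ℕ∞) : ℝ≥0∞)

open scoped NNReal

/-! ### Auxiliary development -/

/-- The coefficient of `h` at the exponent pair `(j, d)`. -/
def Fc (h : PS K m) (x : ℕ × (Fin m →₀ ℕ)) : K :=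
  MvPowerSeries.coeff (R := K) x.2 (PowerSeries.coeff (R := MvPowerSeries (Fin m) K) x.1 h)

/-- The `(p,q)`-weight of an exponent pair. -/
def Wt (p q : ℕ) (x : ℕ × (Fin m →₀ ℕ)) : ℕ := p * x.1 + q * Finsupp.degree x.2

/-- The `(p,q)`-monomial order (valuation) of `h`. -/
def Vord (p q : ℕ) (h : PS K m) : ℕ∞ :=
  ⨅ x : ℕ × (Fin m →₀ ℕ), ⨅ _ : Fc h x ≠ 0, (Wt p q x : ℕ∞)

/-- Lexicographic packaging of an exponent pair. -/
def lexP (x : ℕ × (Fin m →₀ ℕ)) : ℕ ×ₗ Lex (Fin m →₀ ℕ) := toLex (x.1, toLex x.2)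

/-- The `j`-th coefficient of `h` as a power series in the `y`-variables. -/
def acoef (h : PS K m) (j : ℕ) : MvPowerSeries (Fin m) K :=
  PowerSeries.coeff (R := MvPowerSeries (Fin m) K) j h

theorem lexP_add (a b : ℕ × (Fin m →₀ ℕ)) : lexP (a.1 + b.1, a.2 + b.2) = lexP a + lexP b := rfl

theorem lexP_inj {a b : ℕ × (Fin m →₀ ℕ)} (h : lexP a = lexP b) : a = b := by
  unfold lexP at h
  exact Prod.ext (congrArg (fun l => (ofLex l).1) h)
    (congrArg (fun l : ℕ ×ₗ Lex (Fin m →₀ ℕ) => (ofLex (ofLex l).2 : Fin m →₀ ℕ)) h)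

theorem cancel_min {α : Type*} [AddCommMonoid α] [LinearOrder α] [IsOrderedCancelAddMonoid α] {a b c d : α}
    (hab : a ≤ b) (hcd : c ≤ d) (hsum : b + d ≤ a + c) : a = b ∧ c = d := by
  constructor
  · by_contra hne
    exact absurd hsum (add_lt_add_of_lt_of_le (lt_of_le_of_ne hab hne) hcd).not_ge
  · by_contra hne
    exact absurd hsum (add_lt_add_of_le_of_lt hab (lt_of_le_of_ne hcd hne)).not_ge

theorem Wt_add (p q : ℕ) (a b : ℕ × (Fin m →₀ ℕ)) :
    Wt p q (a.1 + b.1, a.2 + b.2) = Wt p q a + Wt p q b := by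
  unfold Wt
  simp only [Finsupp.degree_eq_weight_one, map_add]
  ring

theorem Fc_mul (f g : PS K m) (x : ℕ × (Fin m →₀ ℕ)) :
    Fc (f * g) x = ∑ ij ∈ Finset.HasAntidiagonal.antidiagonal x.1, ∑ de ∈ Finset.HasAntidiagonal.antidiagonal x.2,
      Fc f (ij.1, de.1) * Fc g (ij.2, de.2) := by
  unfold Fc
  rw [PowerSeries.coeff_mul, map_sum]
  exact Finset.sum_congr rfl fun ij _ => MvPowerSeries.coeff_mul _ _ _

theorem exists_Fc_ne (h : PS K m) (hh : h ≠ 0) : ∃ x, Fc h x ≠ 0 := by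
  by_contra hc
  push_neg at hc
  apply hh
  apply PowerSeries.ext fun j => ?_
  apply MvPowerSeries.ext fun d => ?_
  rw [map_zero, map_zero]
  exact hc (j, d)

theorem Vord_le (p q : ℕ) (h : PS K m) {x : ℕ × (Fin m →₀ ℕ)} (hx : Fc h x ≠ 0) :
    Vord p q h ≤ (Wt p q x : ℕ∞) :=
  iInf₂_le x hx

theorem le_Vord (p q : ℕ) (h : PS K m) {n : ℕ∞}
    (H : ∀ x, Fc h x ≠ 0 → n ≤ (Wt p q x : ℕ∞)) : n ≤ Vord p q h :=
  le_iInf₂ H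

theorem Vord_spec (p q : ℕ) (h : PS K m) (hh : h ≠ 0) :
    ∃ x, Fc h x ≠ 0 ∧ (Wt p q x : ℕ∞) = Vord p q h ∧
      ∀ y, Fc h y ≠ 0 → Wt p q y = Wt p q x → lexP x ≤ lexP y := by
  classical
  obtain ⟨z, hz⟩ := exists_Fc_ne h hh
  have hP : ∃ n : ℕ, ∃ x, Fc h x ≠ 0 ∧ Wt p q x = n := ⟨Wt p q z, z, hz, rfl⟩
  have hVn0 : Vord p q h = (Nat.find hP : ℕ∞) := by
    apply le_antisymm
    · obtain ⟨x, hx, hw⟩ := Nat.find_spec hP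
      exact (Vord_le p q h hx).trans (by rw [hw])
    · exact le_Vord p q h fun x hx => by
        exact_mod_cast Nat.find_min' hP ⟨x, hx, rfl⟩
  set A : Set (ℕ ×ₗ Lex (Fin m →₀ ℕ)) :=
    {l | ∃ x, Fc h x ≠ 0 ∧ Wt p q x = Nat.find hP ∧ lexP x = l} with hA
  have hAne : A.Nonempty := by
    obtain ⟨x, hx, hw⟩ := Nat.find_spec hP
    exact ⟨lexP x, x, hx, hw, rfl⟩
  obtain ⟨l, hlA, hlmin⟩ :=
    (IsWellFounded.wf : WellFounded ((· < ·) : (ℕ ×ₗ Lex (Fin m →₀ ℕ)) → _ → Prop)).has_min A hAne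
  obtain ⟨x, hx, hw, hlx⟩ := hlA
  refine ⟨x, hx, by rw [hVn0, hw], fun y hy hwy => ?_⟩
  have hyA : lexP y ∈ A := ⟨y, hy, hwy.trans hw, rfl⟩
  have h2 := hlmin _ hyA
  rw [← hlx] at h2
  exact not_lt.mp h2

theorem Vord_mul (p q : ℕ) (f g : PS K m) (hf : f ≠ 0) (hg : g ≠ 0) :
    Vord p q (f * g) = Vord p q f + Vord p q g := by
  obtain ⟨μ, hμ, hμV, hμmin⟩ := Vord_spec p q f hf
  obtain ⟨ν, hν, hνV, hνmin⟩ := Vord_spec p q g hg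
  apply le_antisymm
  · set x : ℕ × (Fin m →₀ ℕ) := (μ.1 + ν.1, μ.2 + ν.2) with hxdef
    have key : ∀ i1 i2 : ℕ, ∀ d1 d2 : Fin m →₀ ℕ, i1 + i2 = x.1 → d1 + d2 = x.2 →
        ((i1, d1), (i2, d2)) ≠ (μ, ν) → Fc f (i1, d1) * Fc g (i2, d2) = 0 := by
      intro i1 i2 d1 d2 hi hd hne
      by_contra hprod
      have h1 : Fc f (i1, d1) ≠ 0 := fun h => hprod (by rw [h, zero_mul])
      have h2 : Fc g (i2, d2) ≠ 0 := fun h => hprod (by rw [h, mul_zero])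
      have hw1 : Wt p q μ ≤ Wt p q (i1, d1) := by
        have := hμV ▸ Vord_le p q f h1; exact_mod_cast this
      have hw2 : Wt p q ν ≤ Wt p q (i2, d2) := by
        have := hνV ▸ Vord_le p q g h2; exact_mod_cast this
      have hsum : Wt p q (i1, d1) + Wt p q (i2, d2) = Wt p q μ + Wt p q ν := by
        have e2 : Wt p q (i1 + i2, d1 + d2) = Wt p q (i1, d1) + Wt p q (i2, d2) :=
          Wt_add p q (i1, d1) (i2, d2)
        have e3 : Wt p q (μ.1 + ν.1, μ.2 + ν.2) = Wt p q μ + Wt p q ν := Wt_add p q μ ν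
        rw [← e2, ← e3, hi, hd]
      have he1 : Wt p q (i1, d1) = Wt p q μ := by omega
      have he2 : Wt p q (i2, d2) = Wt p q ν := by omega
      have hl1 := hμmin _ h1 he1
      have hl2 := hνmin _ h2 he2
      have hls : lexP (i1, d1) + lexP (i2, d2) = lexP μ + lexP ν := by
        have u : lexP (i1 + i2, d1 + d2) = lexP (i1, d1) + lexP (i2, d2) :=
          lexP_add (i1, d1) (i2, d2)
        have v : lexP (μ.1 + ν.1, μ.2 + ν.2) = lexP μ + lexP ν := lexP_add μ ν
        rw [← u, ← v, hi, hd]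
      obtain ⟨e1, e2⟩ := cancel_min hl1 hl2 (le_of_eq hls)
      exact hne (by rw [← lexP_inj e1.symm, ← lexP_inj e2.symm])
    have hco : Fc (f * g) x = Fc f μ * Fc g ν := by
      rw [Fc_mul]
      have inner0 : ∀ ij ∈ Finset.HasAntidiagonal.antidiagonal x.1, ij ≠ (μ.1, ν.1) →
          (∑ de ∈ Finset.HasAntidiagonal.antidiagonal x.2, Fc f (ij.1, de.1) * Fc g (ij.2, de.2)) = 0 := by
        intro ij hij hne
        apply Finset.sum_eq_zero
        intro de hde
        exact key ij.1 ij.2 de.1 de.2 (Finset.HasAntidiagonal.mem_antidiagonal.mp hij)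
          (Finset.HasAntidiagonal.mem_antidiagonal.mp hde)
          (fun hc => hne (Prod.ext (congrArg (fun z => z.1.1) hc)
            (congrArg (fun z => z.2.1) hc)))
      rw [Finset.sum_eq_single_of_mem (μ.1, ν.1) (Finset.HasAntidiagonal.mem_antidiagonal.mpr rfl) inner0]
      have single0 : ∀ de ∈ Finset.HasAntidiagonal.antidiagonal x.2, de ≠ (μ.2, ν.2) →
          Fc f ((μ.1, ν.1).1, de.1) * Fc g ((μ.1, ν.1).2, de.2) = 0 := by
        intro de hde hne
        exact key μ.1 ν.1 de.1 de.2 rfl (Finset.HasAntidiagonal.mem_antidiagonal.mp hde)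
          (fun hc => hne (Prod.ext (congrArg (fun z => z.1.2) hc)
            (congrArg (fun z => z.2.2) hc)))
      rw [Finset.sum_eq_single_of_mem (μ.2, ν.2) (Finset.HasAntidiagonal.mem_antidiagonal.mpr rfl) single0]
    have hne0 : Fc (f * g) x ≠ 0 := by rw [hco]; exact mul_ne_zero hμ hν
    calc Vord p q (f * g) ≤ (Wt p q x : ℕ∞) := Vord_le p q (f * g) hne0
      _ = Vord p q f + Vord p q g := by
          rw [← hμV, ← hνV]
          rw [show Wt p q x = Wt p q μ + Wt p q ν from Wt_add p q μ ν]
          push_cast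
          rfl
  · apply le_Vord
    intro x hx
    rw [Fc_mul] at hx
    obtain ⟨ij, hij, hij0⟩ := Finset.exists_ne_zero_of_sum_ne_zero hx
    obtain ⟨de, hde, hde0⟩ := Finset.exists_ne_zero_of_sum_ne_zero hij0
    have h1 : Fc f (ij.1, de.1) ≠ 0 := fun h => hde0 (by rw [h, zero_mul])
    have h2 : Fc g (ij.2, de.2) ≠ 0 := fun h => hde0 (by rw [h, mul_zero])
    calc Vord p q f + Vord p q g
        ≤ (Wt p q (ij.1, de.1) : ℕ∞) + (Wt p q (ij.2, de.2) : ℕ∞) :=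
          add_le_add (Vord_le p q f h1) (Vord_le p q g h2)
      _ = (Wt p q x : ℕ∞) := by
          have e2 : Wt p q (ij.1 + ij.2, de.1 + de.2)
              = Wt p q (ij.1, de.1) + Wt p q (ij.2, de.2) := Wt_add p q (ij.1, de.1) (ij.2, de.2)
          rw [← Nat.cast_add, ← e2, Finset.HasAntidiagonal.mem_antidiagonal.mp hij,
            Finset.HasAntidiagonal.mem_antidiagonal.mp hde]

theorem order_le_of_Fc {h : PS K m} {j : ℕ} {d : Fin m →₀ ℕ} (hx : Fc h (j, d) ≠ 0) :
    (acoef h j).order ≤ ((Finsupp.degree d : ℕ) : ℕ∞) :=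
  MvPowerSeries.order_le hx

theorem exists_Fc_order {h : PS K m} {j : ℕ} (hj : acoef h j ≠ 0) :
    ∃ d, Fc h (j, d) ≠ 0 ∧ ((Finsupp.degree d : ℕ) : ℕ∞) = (acoef h j).order := by
  obtain ⟨d, hd, hdeg⟩ := MvPowerSeries.exists_coeff_ne_zero_and_order
    ((MvPowerSeries.ne_zero_iff_order_finite).mp hj)
  exact ⟨d, hd, hdeg⟩

theorem ordT_ge {h : PS K m} {c : ℕ} (H : ordT h = c) (j : ℕ) :
    (c : ℕ∞) ≤ (j : ℕ∞) + (acoef h j).order := by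
  have h1 : (c : ℝ≥0∞) ≤ (j : ℝ≥0∞) + ((acoef h j).order : ℝ≥0∞) := H ▸ iInf_le _ j
  exact_mod_cast h1

theorem ordT_attain {h : PS K m} {c : ℕ} (H : ordT h = c) :
    ∃ j : ℕ, (j : ℕ∞) + (acoef h j).order = (c : ℕ∞) := by
  by_contra hno
  push_neg at hno
  have h1 : ∀ j : ℕ, ((c + 1 : ℕ) : ℝ≥0∞) ≤
      (j : ℝ≥0∞) + ((acoef h j).order : ℝ≥0∞) := by
    intro j
    have h2 : (c : ℕ∞) < (j : ℕ∞) + (acoef h j).order :=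
      lt_of_le_of_ne (ordT_ge H j) (fun hc => hno j hc.symm)
    have h3 : ((c + 1 : ℕ) : ℕ∞) ≤ (j : ℕ∞) + (acoef h j).order := by
      exact_mod_cast Order.add_one_le_of_lt h2
    exact_mod_cast h3
  have h4 : ((c + 1 : ℕ) : ℝ≥0∞) ≤ ordT h := le_iInf h1
  rw [H] at h4
  have : (c + 1 : ℕ) ≤ c := by exact_mod_cast h4
  omega

theorem vord_ge_iff {h : PS K m} {c p q : ℕ} (hq : 0 < q) :
    ((p * c : ℕ) : ℕ∞) ≤ Vord p q h ↔
      ∀ j < c, ((p * (c - j) : ℕ) : ℕ∞) ≤ (q : ℕ∞) * (acoef h j).order := by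
  constructor
  · intro hV j hj
    by_cases h0 : acoef h j = 0
    · rw [show (acoef h j).order = ⊤ from MvPowerSeries.order_eq_top_iff.mpr h0]
      rw [ENat.mul_top (by exact_mod_cast hq.ne')]
      exact le_top
    · obtain ⟨d, hd, hdeg⟩ := exists_Fc_order h0
      have h1 : ((p * c : ℕ) : ℕ∞) ≤ (Wt p q (j, d) : ℕ∞) := hV.trans (Vord_le p q h hd)
      have h2 : p * c ≤ p * j + q * Finsupp.degree d := by exact_mod_cast h1
      have h3 : p * (c - j) + p * j = p * c := by
        rw [← Nat.mul_add, Nat.sub_add_cancel hj.le]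
      have h4 : p * (c - j) ≤ q * Finsupp.degree d := by omega
      rw [← hdeg, ← Nat.cast_mul]
      exact_mod_cast h4
  · intro hE
    apply le_Vord
    rintro ⟨j, d⟩ hx
    by_cases hj : j < c
    · have h1 : ((p * (c - j) : ℕ) : ℕ∞) ≤ (q : ℕ∞) * ((Finsupp.degree d : ℕ) : ℕ∞) :=
        (hE j hj).trans (mul_le_mul_right (order_le_of_Fc hx) _)
      have h2 : p * (c - j) ≤ q * Finsupp.degree d := by exact_mod_cast h1
      have h3 : p * (c - j) + p * j = p * c := by
        rw [← Nat.mul_add, Nat.sub_add_cancel hj.le]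
      have h4 : p * c ≤ Wt p q (j, d) := by
        show p * c ≤ p * j + q * Finsupp.degree d
        omega
      exact_mod_cast h4
    · have h4 : p * c ≤ Wt p q (j, d) := by
        show p * c ≤ p * j + q * Finsupp.degree d
        have := Nat.mul_le_mul_left p (not_lt.mp hj)
        omega
      exact_mod_cast h4

theorem vord_le_mul {h : PS K m} {c p q : ℕ} (hpq : q ≤ p)
    (hβ : ∃ j : ℕ, (j : ℕ∞) + (acoef h j).order = (c : ℕ∞)) :
    Vord p q h ≤ ((p * c : ℕ) : ℕ∞) := by
  obtain ⟨j0, hj0⟩ := hβ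
  have hfin : (acoef h j0).order ≠ ⊤ := by
    intro ht
    rw [ht] at hj0
    simp at hj0
  have h0 : acoef h j0 ≠ 0 := fun hz =>
    hfin (MvPowerSeries.order_eq_top_iff.mpr hz)
  obtain ⟨d0, hd0, hdeg⟩ := exists_Fc_order h0
  have hsum : j0 + Finsupp.degree d0 = c := by
    have : ((j0 + Finsupp.degree d0 : ℕ) : ℕ∞) = (c : ℕ∞) := by
      push_cast
      rw [hdeg]
      exact hj0
    exact_mod_cast this
  calc Vord p q h ≤ (Wt p q (j0, d0) : ℕ∞) := Vord_le p q h hd0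
    _ ≤ ((p * c : ℕ) : ℕ∞) := by
        have : Wt p q (j0, d0) ≤ p * c := by
          show p * j0 + q * Finsupp.degree d0 ≤ p * c
          calc p * j0 + q * Finsupp.degree d0 ≤ p * j0 + p * Finsupp.degree d0 :=
                add_le_add_right (Nat.mul_le_mul_right _ hpq) _
            _ = p * (j0 + Finsupp.degree d0) := (Nat.mul_add _ _ _).symm
            _ = p * c := by rw [hsum]
        exact_mod_cast this

theorem div_le_div_mul_iff {p q c k : ℕ} (hq : q ≠ 0) (hk : k ≠ 0) (hc : c ≠ 0) (r : ℝ≥0∞) :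
    ((p : ℝ≥0∞) * c) / q ≤ ((c : ℝ≥0∞) / k) * r ↔ ((p * k : ℕ) : ℝ≥0∞) ≤ (q : ℝ≥0∞) * r := by
  have hq' : (q : ℝ≥0∞) ≠ 0 := by exact_mod_cast hq
  have hk' : (k : ℝ≥0∞) ≠ 0 := by exact_mod_cast hk
  have hc' : (c : ℝ≥0∞) ≠ 0 := by exact_mod_cast hc
  have hqt : (q : ℝ≥0∞) ≠ ⊤ := ENNReal.natCast_ne_top q
  have hkt : (k : ℝ≥0∞) ≠ ⊤ := ENNReal.natCast_ne_top k
  have hct : (c : ℝ≥0∞) ≠ ⊤ := ENNReal.natCast_ne_top c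
  rw [ENNReal.div_le_iff_le_mul (Or.inl hq') (Or.inl hqt)]
  rw [show (c : ℝ≥0∞) / k * r * q = c * (q * r) / k by
    rw [div_eq_mul_inv, div_eq_mul_inv]; ring]
  rw [ENNReal.le_div_iff_mul_le (Or.inl hk') (Or.inl hkt)]
  rw [show (p : ℝ≥0∞) * c * k = c * (p * k) by ring]
  rw [ENNReal.mul_le_mul_iff_right hc' hct]
  push_cast
  rfl

theorem le_eOrd_iff {h : PS K m} {c p q : ℕ} (hq : 0 < q) (hc : 0 < c) :
    (p : ℝ≥0∞) / q ≤ eOrd h c / c ↔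
      ∀ j < c, ((p * (c - j) : ℕ) : ℕ∞) ≤ (q : ℕ∞) * (acoef h j).order := by
  have hc' : (c : ℝ≥0∞) ≠ 0 := by exact_mod_cast hc.ne'
  have hct : (c : ℝ≥0∞) ≠ ⊤ := ENNReal.natCast_ne_top c
  rw [ENNReal.le_div_iff_mul_le (Or.inl hc') (Or.inl hct)]
  rw [show (p : ℝ≥0∞) / q * c = (p : ℝ≥0∞) * c / q by
    rw [div_eq_mul_inv, div_eq_mul_inv]; ring]
  rw [eOrd, le_iInf₂_iff]
  refine forall_congr' fun j => ?_
  constructor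
  · intro h1 hj
    have h2 := h1 hj
    rw [← ENNReal.natCast_sub, div_le_div_mul_iff hq.ne' (Nat.sub_ne_zero_of_lt hj) hc.ne'] at h2
    have h3 : (((p * (c - j) : ℕ) : ℕ∞) : ℝ≥0∞)
        ≤ (((q : ℕ∞) * (acoef h j).order : ℕ∞) : ℝ≥0∞) := by
      rw [ENat.toENNReal_mul]
      exact_mod_cast h2
    exact_mod_cast h3
  · intro h1 hj
    have h2 := h1 hj
    rw [← ENNReal.natCast_sub, div_le_div_mul_iff hq.ne' (Nat.sub_ne_zero_of_lt hj) hc.ne']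
    have h3 : (((p * (c - j) : ℕ) : ℕ∞) : ℝ≥0∞)
        ≤ (((q : ℕ∞) * (acoef h j).order : ℕ∞) : ℝ≥0∞) := by
      exact_mod_cast h2
    rw [ENat.toENNReal_mul] at h3
    exact_mod_cast h3

theorem rat_to_div {r : ℚ} (hr : 0 < r) :
    ((Real.toNNReal (r : ℝ) : ℝ≥0) : ℝ≥0∞) = (r.num.toNat : ℝ≥0∞) / (r.den : ℝ≥0∞) := by
  have hnum : (0 : ℝ) ≤ (r.num : ℝ) := by exact_mod_cast (Rat.num_pos.mpr hr).le
  have h1 : (r : ℝ) = (r.num : ℝ) / (r.den : ℝ) := by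
    rw [Rat.cast_def]
  rw [h1, Real.toNNReal_div hnum]
  have h2 : Real.toNNReal (r.num : ℝ) = (r.num.toNat : ℝ≥0) := by
    rw [show ((r.num : ℝ)) = ((r.num.toNat : ℝ≥0) : ℝ) by
      push_cast
      norm_cast
      exact (Int.toNat_of_nonneg (Rat.num_pos.mpr hr).le).symm]
    exact Real.toNNReal_coe
  have h3 : Real.toNNReal (r.den : ℝ) = (r.den : ℝ≥0) := by
    rw [show ((r.den : ℝ)) = ((r.den : ℝ≥0) : ℝ) by norm_cast]
    exact Real.toNNReal_coe
  rw [h2, h3, ENNReal.coe_div (by exact_mod_cast r.den_nz)]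
  norm_cast

theorem eq_of_rat_le_iff {a b : ℝ≥0∞} (ha : 1 ≤ a) (hb : 1 ≤ b)
    (H : ∀ p q : ℕ, 0 < q → q ≤ p → ((p : ℝ≥0∞) / q ≤ a ↔ (p : ℝ≥0∞) / q ≤ b)) : a = b := by
  suffices key : ∀ a b : ℝ≥0∞, 1 ≤ a →
      (∀ p q : ℕ, 0 < q → q ≤ p → ((p : ℝ≥0∞) / q ≤ a ↔ (p : ℝ≥0∞) / q ≤ b)) → ¬a < b by
    rcases lt_trichotomy a b with h | h | h
    · exact absurd h (key a b ha H)
    · exact h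
    · exact absurd h (key b a hb fun p q h1 h2 => (H p q h1 h2).symm)
  clear ha hb H a b
  intro a b ha H hab
  rcases ENNReal.lt_iff_exists_rat_btwn.mp hab with ⟨r, hr0, har, hrb⟩
  have hl1 : (1 : ℝ≥0∞) < (Real.toNNReal r : ℝ≥0∞) := lt_of_le_of_lt ha har
  have hrpos : (0 : ℚ) < r := by
    by_contra hc
    push_neg at hc
    rw [show Real.toNNReal r = 0 from Real.toNNReal_of_nonpos (by exact_mod_cast hc)] at hl1
    simp at hl1
  have hLeq : ((Real.toNNReal (r : ℝ) : ℝ≥0) : ℝ≥0∞) = (r.num.toNat : ℝ≥0∞) / (r.den : ℝ≥0∞) :=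
    rat_to_div hrpos
  set p := r.num.toNat
  set q := r.den
  have hq : 0 < q := r.pos
  have hq' : (q : ℝ≥0∞) ≠ 0 := by exact_mod_cast hq.ne'
  have hqp : q ≤ p := by
    have h2 : (q : ℝ≥0∞) < p := by
      rw [hLeq] at hl1
      rw [ENNReal.lt_div_iff_mul_lt (Or.inl hq') (Or.inl (ENNReal.natCast_ne_top q))] at hl1
      simpa using hl1
    exact_mod_cast h2.le
  have hba := (H p q hq hqp).mpr (le_of_lt (hLeq ▸ hrb))
  rw [← hLeq] at hba
  exact absurd (lt_of_lt_of_le har hba) (lt_irrefl _)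

/-- For nonzero `f, g ∈ K[[x, y]]` of orders `c_P`, `c_Q`, the normalized orders of the
projected Newton polyhedra satisfy `e_{fg}/(c_P+c_Q) = min{e_f/c_P, e_g/c_Q}`. -/
theorem eOrd_mul (f g : PS K m) (hf : f ≠ 0) (hg : g ≠ 0)
    (cP cQ : ℕ) (hcP : 0 < cP) (hcQ : 0 < cQ)
    (hfo : ordT f = cP) (hgo : ordT g = cQ) :
    eOrd (f * g) (cP + cQ) / ((cP + cQ : ℕ) : ℝ≥0∞) =
      min (eOrd f cP / (cP : ℝ≥0∞)) (eOrd g cQ / (cQ : ℝ≥0∞)) := by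
  have hβf := ordT_attain hfo
  have hβg := ordT_attain hgo
  have hαf := ordT_ge hfo
  have hαg := ordT_ge hgo
  -- the main rational comparison
  have main : ∀ p q : ℕ, 0 < q → q ≤ p →
      ((p : ℝ≥0∞) / q ≤ eOrd (f * g) (cP + cQ) / ((cP + cQ : ℕ) : ℝ≥0∞) ↔
        (p : ℝ≥0∞) / q ≤ min (eOrd f cP / (cP : ℝ≥0∞)) (eOrd g cQ / (cQ : ℝ≥0∞))) := by
    intro p q hq hqp
    have split : ((p * (cP + cQ) : ℕ) : ℕ∞) ≤ Vord p q f + Vord p q g ↔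
        ((p * cP : ℕ) : ℕ∞) ≤ Vord p q f ∧ ((p * cQ : ℕ) : ℕ∞) ≤ Vord p q g := by
      have huf := vord_le_mul hqp hβf
      have hug := vord_le_mul hqp hβg
      have hVf_ne : Vord p q f ≠ ⊤ := ne_top_of_le_ne_top (ENat.coe_ne_top _) huf
      have hVg_ne : Vord p q g ≠ ⊤ := ne_top_of_le_ne_top (ENat.coe_ne_top _) hug
      lift Vord p q f to ℕ using hVf_ne with a ha
      lift Vord p q g to ℕ using hVg_ne with b hb
      have huf' : a ≤ p * cP := by exact_mod_cast huf
      have hug' : b ≤ p * cQ := by exact_mod_cast hug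
      constructor
      · intro hle
        have hle' : p * (cP + cQ) ≤ a + b := by exact_mod_cast hle
        have hmm : p * (cP + cQ) = p * cP + p * cQ := Nat.mul_add p cP cQ
        constructor
        · have : p * cP ≤ a := by omega
          exact_mod_cast this
        · have : p * cQ ≤ b := by omega
          exact_mod_cast this
      · rintro ⟨h1, h2⟩
        have h1' : p * cP ≤ a := by exact_mod_cast h1
        have h2' : p * cQ ≤ b := by exact_mod_cast h2
        have hmm : p * (cP + cQ) = p * cP + p * cQ := Nat.mul_add p cP cQ
        have : p * (cP + cQ) ≤ a + b := by omega
        exact_mod_cast this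
    calc (p : ℝ≥0∞) / q ≤ eOrd (f * g) (cP + cQ) / ((cP + cQ : ℕ) : ℝ≥0∞)
        ↔ ∀ j < cP + cQ, ((p * (cP + cQ - j) : ℕ) : ℕ∞) ≤ (q : ℕ∞) * (acoef (f * g) j).order :=
          le_eOrd_iff hq (by omega)
      _ ↔ ((p * (cP + cQ) : ℕ) : ℕ∞) ≤ Vord p q (f * g) := (vord_ge_iff hq).symm
      _ ↔ ((p * (cP + cQ) : ℕ) : ℕ∞) ≤ Vord p q f + Vord p q g := by
          rw [Vord_mul p q f g hf hg]
      _ ↔ (((p * cP : ℕ) : ℕ∞) ≤ Vord p q f ∧ ((p * cQ : ℕ) : ℕ∞) ≤ Vord p q g) := split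
      _ ↔ ((p : ℝ≥0∞) / q ≤ eOrd f cP / (cP : ℝ≥0∞) ∧
            (p : ℝ≥0∞) / q ≤ eOrd g cQ / (cQ : ℝ≥0∞)) := by
          rw [le_eOrd_iff hq hcP, le_eOrd_iff hq hcQ, vord_ge_iff hq, vord_ge_iff hq]
      _ ↔ (p : ℝ≥0∞) / q ≤ min (eOrd f cP / (cP : ℝ≥0∞)) (eOrd g cQ / (cQ : ℝ≥0∞)) :=
          (le_min_iff).symm
  -- both sides are at least 1
  have hone : ∀ (h : PS K m) (c : ℕ), 0 < c → (∀ j : ℕ, (c : ℕ∞) ≤ (j : ℕ∞) + (acoef h j).order)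
      → (1 : ℝ≥0∞) ≤ eOrd h c / (c : ℝ≥0∞) := by
    intro h c hc hα
    have h1 : ((1 : ℕ) : ℝ≥0∞) / ((1 : ℕ) : ℝ≥0∞) ≤ eOrd h c / c := by
      rw [le_eOrd_iff Nat.one_pos hc, ← vord_ge_iff Nat.one_pos]
      rw [show (1 * c : ℕ) = c by ring]
      apply le_Vord
      rintro ⟨j, d⟩ hx
      calc (c : ℕ∞) ≤ (j : ℕ∞) + (acoef h j).order := hα j
        _ ≤ (j : ℕ∞) + ((Finsupp.degree d : ℕ) : ℕ∞) := add_le_add_right (order_le_of_Fc hx) _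
        _ = (Wt 1 1 (j, d) : ℕ∞) := by
            show _ = ((1 * j + 1 * Finsupp.degree d : ℕ) : ℕ∞)
            push_cast
            ring
    simpa using h1
  have h1f : (1 : ℝ≥0∞) ≤ eOrd f cP / (cP : ℝ≥0∞) := hone f cP hcP hαf
  have h1g : (1 : ℝ≥0∞) ≤ eOrd g cQ / (cQ : ℝ≥0∞) := hone g cQ hcQ hαg
  have h1fg : (1 : ℝ≥0∞) ≤ eOrd (f * g) (cP + cQ) / ((cP + cQ : ℕ) : ℝ≥0∞) := by
    have := (main 1 1 Nat.one_pos le_rfl).mpr (by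
      rw [le_min_iff]
      constructor
      · simpa using h1f
      · simpa using h1g)
    simpa using this
  exact eq_of_rat_le_iff h1fg (le_min h1f h1g) main

end
end

section
/- Let (R,m) be a regular local ring containing a field of characteristic zero, and let P be an ideal with 1 ≤ d = ord(P) < ∞. Then there exists a regular parameter x ∈ m (an osculating hypersurface V = {x=0}) such that the locus top(P) of points where P has order d is locally contained in V. (Local power-series version: for P ⊆ K[[x_1,...,x_n]], char K = 0, of order d ≥ 1, there is a formal coordinate change after which P contains an element f with ∂^{d−1}f/∂x_1^{d−1} a unit times x_1 plus higher order, and every point of a neighborhood where P has order d satisfies x_1 = 0.) -/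
open MvPolynomial

private lemma coeff_pderiv' {K : Type*} [Field K] {n : ℕ} (i : Fin n) (m : Fin n →₀ ℕ)
    (F : MvPolynomial (Fin n) K) :
    coeff m (pderiv i F) = (m i + 1) * coeff (m + Finsupp.single i 1) F := by
  induction F using MvPolynomial.induction_on' with
  | monomial s c =>
    rw [pderiv_monomial, coeff_monomial, coeff_monomial]
    by_cases h : s = m + Finsupp.single i 1
    · subst h
      have h1 : m + Finsupp.single i 1 - Finsupp.single i 1 = m := by simp
      rw [if_pos h1]
      simp [mul_comm]
    · rw [if_neg h]
      by_cases h2 : s - Finsupp.single i 1 = m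
      · rw [if_pos h2]
        have hsi : s i = 0 := by
          by_contra hne
          apply h
          rw [← h2]
          ext j
          by_cases hj : i = j
          · subst hj; simp [Finsupp.single_apply]; omega
          · simp [Finsupp.single_apply, hj]
        simp [hsi]
      · simp [h2]
  | add p q hp hq => simp [hp, hq, mul_add]

private lemma pderiv_shift {K : Type*} [Field K] {n : ℕ} (b : Fin n → K) (i : Fin n)
    (g : MvPolynomial (Fin n) K) :
    pderiv i (aeval (fun j => X j + C (b j)) g) = aeval (fun j => X j + C (b j)) (pderiv i g) := by
  induction g using MvPolynomial.induction_on with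
  | C r => simp
  | add p q hp hq => rw [map_add, map_add, map_add, map_add, hp, hq]
  | mul_X p j hp =>
    rw [map_mul, pderiv_mul, pderiv_mul, hp, aeval_X, map_add, map_add, map_mul]
    by_cases h : i = j <;> simp [h, Pi.single_apply]

private lemma foldr_pderiv_shift {K : Type*} [Field K] {n : ℕ} (b : Fin n → K)
    (l : List (Fin n)) (g : MvPolynomial (Fin n) K) :
    l.foldr (fun i p => pderiv i p) (aeval (fun j => X j + C (b j)) g) =
      aeval (fun j => X j + C (b j)) (l.foldr (fun i p => pderiv i p) g) := by
  induction l with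
  | nil => rfl
  | cons i t ih => rw [List.foldr_cons, List.foldr_cons, ih, pderiv_shift]

private lemma constantCoeff_shift {K : Type*} [Field K] {n : ℕ} (b : Fin n → K)
    (g : MvPolynomial (Fin n) K) :
    constantCoeff (aeval (fun j => X j + C (b j)) g) = eval b g := by
  induction g using MvPolynomial.induction_on with
  | C r => simp
  | add p q hp hq => rw [map_add, map_add, map_add, hp, hq]
  | mul_X p j hp => rw [map_mul, map_mul, map_mul, hp]; simp

private lemma coeff_foldr_pderiv {K : Type*} [Field K] {n : ℕ} (F : MvPolynomial (Fin n) K)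
    (l : List (Fin n)) : ∀ m : Fin n →₀ ℕ, ∃ c : ℕ, 0 < c ∧
      coeff m (l.foldr (fun i p => pderiv i p) F) =
        (c : K) * coeff (m + (l.map fun j => Finsupp.single j 1).sum) F := by
  induction l with
  | nil => intro m; exact ⟨1, one_pos, by simp⟩
  | cons i t ih =>
    intro m
    obtain ⟨c, hc, hcoeff⟩ := ih (m + Finsupp.single i 1)
    refine ⟨(m i + 1) * c, by positivity, ?_⟩
    rw [List.foldr_cons, coeff_pderiv', hcoeff, List.map_cons, List.sum_cons, ← add_assoc]
    push_cast
    ring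

private lemma polyOrd_le {K : Type*} [Field K] {n : ℕ} {F : MvPolynomial (Fin n) K}
    {m : Fin n →₀ ℕ} (h : coeff m F ≠ 0) : polyOrd F ≤ (m.sum fun _ e => e : ℕ) :=
  sInf_le ⟨m, rfl, h⟩

private lemma coeff_eq_zero_of_lt_polyOrd {K : Type*} [Field K] {n : ℕ}
    {F : MvPolynomial (Fin n) K} {m : Fin n →₀ ℕ}
    (h : ((m.sum fun _ e => e : ℕ) : ℕ∞) < polyOrd F) : coeff m F = 0 := by
  by_contra hne
  exact absurd (polyOrd_le hne) (not_le.mpr h)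

private lemma polyOrd_attained {K : Type*} [Field K] {n : ℕ} {F : MvPolynomial (Fin n) K}
    {d : ℕ} (h : polyOrd F = d) : ∃ m : Fin n →₀ ℕ, (m.sum fun _ e => e) = d ∧ coeff m F ≠ 0 := by
  have hne : {e : ℕ∞ | ∃ m : Fin n →₀ ℕ, (↑(m.sum fun _ e => e) = e) ∧ coeff m F ≠ 0}.Nonempty := by
    by_contra hemp
    rw [Set.not_nonempty_iff_eq_empty] at hemp
    rw [polyOrd, hemp, sInf_empty] at h
    exact (ENat.coe_ne_top d) h.symm
  have := csInf_mem hne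
  rw [← polyOrd, h] at this
  obtain ⟨m, hm, hc⟩ := this
  exact ⟨m, Nat.cast_inj.mp hm, hc⟩

/-- Osculating hypersurfaces in characteristic zero.  Let `f` have order `d ≥ 1` at
the point `a` over a field of characteristic zero.  Then some partial derivative `g`
of `f` of order `d−1` has order `1` at `a`, and the zero set of `g` (a regular
hypersurface) contains every point `b` where `f` has order `≥ d`: the top locus of `f`
is locally contained in the osculating hypersurface `{g = 0}`. -/
theorem osculating_hypersurface {K : Type*} [Field K] [CharZero K] {n : ℕ}
    (f : MvPolynomial (Fin n) K) (d : ℕ) (hd : 1 ≤ d) (a : Fin n → K)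
    (hfa : polyOrdAt a f = d) :
    ∃ l : List (Fin n), l.length = d - 1 ∧
      polyOrdAt a (l.foldr (fun i p => MvPolynomial.pderiv i p) f) = 1 ∧
      ∀ b : Fin n → K, (d : ℕ∞) ≤ polyOrdAt b f →
        MvPolynomial.eval b (l.foldr (fun i p => MvPolynomial.pderiv i p) f) = 0 := by
  classical
  -- get a monomial of degree d with nonzero coefficient in the shifted polynomial
  obtain ⟨m, hmd, hmc⟩ := polyOrd_attained hfa
  -- pick i with m i ≠ 0
  have hmne : ∃ i, m i ≠ 0 := by
    by_contra hall
    push_neg at hall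
    have : m = 0 := Finsupp.ext fun j => hall j
    rw [this] at hmd
    simp at hmd
    omega
  obtain ⟨i, hi⟩ := hmne
  set m' : Fin n →₀ ℕ := m - Finsupp.single i 1 with hm'
  have hm'add : m' + Finsupp.single i 1 = m := by
    ext j
    by_cases hj : i = j
    · subst hj
      simp only [hm', Finsupp.add_apply, Finsupp.tsub_apply, Finsupp.single_eq_same]
      omega
    · simp [hm', Finsupp.single_apply, hj]
  -- degrees
  have hdegsingle : ((Finsupp.single i 1 : Fin n →₀ ℕ).sum fun _ e => e) = 1 :=
    Finsupp.sum_single_index rfl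
  have hm'deg : (m'.sum fun _ e => e) = d - 1 := by
    have := Finsupp.sum_add_index' (h := fun (_ : Fin n) (e : ℕ) => e)
        (f := m') (g := Finsupp.single i 1) (fun _ => rfl) (fun _ _ _ => rfl)
    rw [hm'add, hmd, hdegsingle] at this
    omega
  -- the list
  set l : List (Fin n) := (Finsupp.toMultiset m').toList with hl
  have hlsum : (l.map fun j => Finsupp.single j 1).sum = m' := by
    have key : ∀ s : Multiset (Fin n), (s.map fun j => Finsupp.single j 1).sum = s.toFinsupp := by
      intro s
      induction s using Multiset.induction with
      | empty => simp
      | cons x t ih =>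
        rw [Multiset.map_cons, Multiset.sum_cons, ih, ← Multiset.singleton_add,
          Multiset.toFinsupp_add, Multiset.toFinsupp_singleton]
    have : ((l : Multiset (Fin n)).map fun j => Finsupp.single j 1).sum = m' := by
      rw [hl, Multiset.coe_toList, key, Finsupp.toMultiset_toFinsupp]
    rwa [Multiset.map_coe, Multiset.sum_coe] at this
  have hllen : l.length = d - 1 := by
    rw [hl, Multiset.length_toList, Finsupp.card_toMultiset, ← hm'deg]
    rfl
  refine ⟨l, hllen, ?_, ?_⟩
  · -- polyOrdAt a g = 1
    obtain ⟨c0, hc0pos, hc0⟩ := coeff_foldr_pderiv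
      (aeval (fun j => X j + C (a j)) f) l 0
    obtain ⟨c1, hc1pos, hc1⟩ := coeff_foldr_pderiv
      (aeval (fun j => X j + C (a j)) f) l (Finsupp.single i 1)
    rw [hlsum, zero_add] at hc0
    rw [hlsum] at hc1
    have hG : polyOrdAt a (l.foldr (fun i p => pderiv i p) f) =
        polyOrd (l.foldr (fun i p => pderiv i p) (aeval (fun j => X j + C (a j)) f)) := by
      rw [polyOrdAt, foldr_pderiv_shift]
    rw [hG]
    -- nonzero coefficient at single i 1
    have hcoeff1 : coeff (Finsupp.single i 1)
        (l.foldr (fun i p => pderiv i p) (aeval (fun j => X j + C (a j)) f)) ≠ 0 := by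
      rw [hc1]
      have hmm : Finsupp.single i 1 + m' = m := by rw [add_comm]; exact hm'add
      rw [hmm]
      exact mul_ne_zero (Nat.cast_ne_zero.mpr hc1pos.ne') hmc
    -- zero coefficient at 0
    have hcoeff0 : coeff 0
        (l.foldr (fun i p => pderiv i p) (aeval (fun j => X j + C (a j)) f)) = 0 := by
      rw [hc0]
      have : coeff m' (aeval (fun j => X j + C (a j)) f) = 0 := by
        apply coeff_eq_zero_of_lt_polyOrd
        have hfa' : polyOrd ((aeval fun j => X j + C (a j)) f) = (d : ℕ∞) := hfa
        rw [hfa', hm'deg]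
        exact_mod_cast Nat.sub_lt (by omega) (by omega)
      rw [this, mul_zero]
    apply le_antisymm
    · have := polyOrd_le hcoeff1
      rwa [hdegsingle] at this
    · apply le_sInf
      rintro e ⟨mm, hmm, hmmne⟩
      rcases Nat.eq_zero_or_pos (mm.sum fun _ e => e) with h0 | h1
      · exfalso
        have hmm0 : mm = 0 := by
          ext j
          simp only [Finsupp.coe_zero, Pi.zero_apply]
          by_contra hj
          have hjmem : j ∈ mm.support := Finsupp.mem_support_iff.mpr hj
          have hpos : 0 < mm.sum fun _ e => e :=
            Finset.sum_pos' (fun _ _ => Nat.zero_le _)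
              ⟨j, hjmem, Nat.pos_of_ne_zero hj⟩
          omega
        rw [hmm0] at hmmne
        exact hmmne hcoeff0
      · rw [← hmm]
        exact_mod_cast h1
  · -- containment
    intro b hb
    obtain ⟨c, hcpos, hc⟩ := coeff_foldr_pderiv (aeval (fun j => X j + C (b j)) f) l 0
    rw [hlsum, zero_add] at hc
    have hcoeffm' : coeff m' (aeval (fun j => X j + C (b j)) f) = 0 := by
      apply coeff_eq_zero_of_lt_polyOrd
      calc ((m'.sum fun _ e => e : ℕ) : ℕ∞) < d := by
            rw [hm'deg]; exact_mod_cast Nat.sub_lt (by omega) (by omega)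
        _ ≤ polyOrdAt b f := hb
    have := constantCoeff_shift b (l.foldr (fun i p => pderiv i p) f)
    rw [← this, constantCoeff_eq, ← foldr_pderiv_shift, hc, hcoeffm', mul_zero]
end
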